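/- arXiv:1108.3798 — 4 statements merged into one kernel-verified Lean document; each statement's English description precedes it below -/
import Mathlib

section
/- Suppose there exist x ∈ X, y0, y1 ∈ Ȳ, and t ∈ (0,1) with p := (1−t)·D_x b(x, y0) + t·D_x b(x, y1) ∉ D_x b(x, Ȳ). If v0, v1 are b-convex functions differentiable at x with Dv_i(x) = D_x b(x, y_i) for i = 0, 1, then the convex combination v_t := (1−t)·v0 + t·v1 is not b-convex. In particular, the set of b-convex functions is not convex. -/
/-- `u` is `b`-convex on `X` (with goods `Ȳ`): `u(x) = sup_{y ∈ Ȳ} (b(x,y) - v(y))` for some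
lower semicontinuous price schedule `v : Ȳ → ℝ ∪ {+∞}`, not identically `+∞`. -/
def BConvexOn (m n : ℕ) (X : Set (Fin m → ℝ)) (Ybar : Set (Fin n → ℝ))
    (b : (Fin m → ℝ) → (Fin n → ℝ) → ℝ) (u : (Fin m → ℝ) → ℝ) : Prop :=
  ∃ v : (Fin n → ℝ) → EReal, LowerSemicontinuousOn v Ybar ∧ (∀ y, v y ≠ ⊥) ∧
    (∃ y ∈ Ybar, v y ≠ ⊤) ∧
    ∀ x ∈ X, IsLUB {r : ℝ | ∃ y ∈ Ybar, (r : EReal) = (b x y : EReal) - v y} (u x)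

lemma ereal_eq_coe_of_eq_sub {B r : ℝ} {w : EReal} (hw : w ≠ ⊥)
    (h : (r : EReal) = (B : EReal) - w) : w = ((B - r : ℝ) : EReal) := by
  have hwt : w ≠ ⊤ := by
    rintro rfl
    rw [EReal.sub_top] at h
    exact (EReal.coe_ne_bot r) h
  lift w to ℝ using ⟨hwt, hw⟩
  rw [← EReal.coe_sub, EReal.coe_eq_coe_iff] at h
  norm_cast
  linarith

/-- Key lemma: if `u` is `b`-convex and differentiable at `x ∈ X`, then
`Du(x) = D_x b(x, ȳ)` for some `ȳ ∈ Ȳ`. -/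
lemma bconvex_fderiv_mem (m n : ℕ) (X : Set (Fin m → ℝ)) (Ybar : Set (Fin n → ℝ))
    (hXo : IsOpen X) (hYc : IsCompact Ybar)
    (b : (Fin m → ℝ) → (Fin n → ℝ) → ℝ)
    (hb : Continuous (fun p : (Fin m → ℝ) × (Fin n → ℝ) => b p.1 p.2))
    (hbx : ∀ y ∈ Ybar, Differentiable ℝ (fun x' => b x' y))
    (u : (Fin m → ℝ) → ℝ) (hu : BConvexOn m n X Ybar b u)
    (x : Fin m → ℝ) (hx : x ∈ X) (hd : DifferentiableAt ℝ u x) :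
    ∃ y ∈ Ybar, fderiv ℝ u x = fderiv ℝ (fun x' => b x' y) x := by
  obtain ⟨v, hvlsc, hvbot, ⟨y', hy', hy't⟩, hlub⟩ := hu
  have hbcont : Continuous fun y => b x y := hb.comp (Continuous.prodMk_right x)
  have hSne : ({r : ℝ | ∃ y ∈ Ybar, (r : EReal) = (b x y : EReal) - v y}).Nonempty := by
    refine ⟨b x y' - (v y').toReal, y', hy', ?_⟩
    rw [EReal.coe_sub]
    congr 1
    exact EReal.coe_toReal hy't (hvbot y')
  obtain ⟨r, hrmono, hrle, hrtend, hrmem⟩ :=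
    (hlub x hx).exists_seq_monotone_tendsto hSne
  choose ys hys hysr using hrmem
  obtain ⟨ybar, hybar, φ, hφ, hyφ⟩ := hYc.tendsto_subseq hys
  have hv_eq : ∀ k, v (ys k) = ((b x (ys k) - r k : ℝ) : EReal) := fun k =>
    ereal_eq_coe_of_eq_sub (hvbot _) (hysr k)
  set c₀ : ℝ := b x ybar - u x with hc₀
  have htend1 : Filter.Tendsto (fun k => b x (ys (φ k)) - r (φ k)) Filter.atTop (nhds c₀) :=
    (hbcont.continuousAt.tendsto.comp hyφ).sub (hrtend.comp hφ.tendsto_atTop)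
  have hvy : v ybar ≤ ((c₀ : ℝ) : EReal) := by
    by_contra hlt
    push_neg at hlt
    obtain ⟨c, hc1, hc2⟩ := exists_between hlt
    have hcb : c ≠ ⊥ := ne_bot_of_gt hc1
    have hct : c ≠ ⊤ := ne_top_of_lt hc2
    lift c to ℝ using ⟨hct, hcb⟩
    have hmem : Filter.Tendsto (fun k => ys (φ k)) Filter.atTop (nhdsWithin ybar Ybar) := by
      rw [tendsto_nhdsWithin_iff]
      exact ⟨hyφ, Filter.Eventually.of_forall fun k => hys (φ k)⟩
    have hev := hmem.eventually (hvlsc ybar hybar (c : EReal) hc2)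
    have hev' : ∀ᶠ k in Filter.atTop, c ≤ b x (ys (φ k)) - r (φ k) := by
      filter_upwards [hev] with k hk
      rw [hv_eq (φ k)] at hk
      exact_mod_cast hk.le
    have : c ≤ c₀ := ge_of_tendsto htend1 hev'
    exact absurd hc1 (not_lt.2 (by exact_mod_cast this))
  have hvyt : v ybar ≠ ⊤ := fun h => by simp [h] at hvy
  set w : ℝ := (v ybar).toReal with hw
  have hvw : v ybar = (w : EReal) := (EReal.coe_toReal hvyt (hvbot ybar)).symm
  have hwc : w ≤ c₀ := by rw [hvw] at hvy; exact_mod_cast hvy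
  have hcw : c₀ ≤ w := by
    have hmem : b x ybar - w ∈ {r : ℝ | ∃ y ∈ Ybar, (r : EReal) = (b x y : EReal) - v y} :=
      ⟨ybar, hybar, by rw [hvw, ← EReal.coe_sub]⟩
    have := (hlub x hx).1 hmem
    simp only [hc₀]
    linarith
  have hwc₀ : w = c₀ := le_antisymm hwc hcw
  -- global minimum of u - b(·, ybar) on X at x
  have hmin : ∀ x' ∈ X, u x - b x ybar ≤ u x' - b x' ybar := by
    intro x' hx'
    have hmem : b x' ybar - w ∈
        {r : ℝ | ∃ y ∈ Ybar, (r : EReal) = (b x' y : EReal) - v y} :=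
      ⟨ybar, hybar, by rw [hvw, ← EReal.coe_sub]⟩
    have := (hlub x' hx').1 hmem
    rw [hwc₀] at this
    simp only [hc₀] at this
    linarith
  have hloc : IsLocalMin (fun x' => u x' - b x' ybar) x := by
    filter_upwards [hXo.mem_nhds hx] with x' hx'
    exact hmin x' hx'
  have hdb : DifferentiableAt ℝ (fun x' => b x' ybar) x := (hbx ybar hybar) x
  have h0 := hloc.fderiv_eq_zero
  rw [fderiv_fun_sub hd hdb] at h0
  exact ⟨ybar, hybar, sub_eq_zero.1 h0⟩

/-- If `Ȳ` fails to be `b`-convex at some `x ∈ X` (i.e. some convex combination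
`p = (1-t) D_x b(x,y0) + t D_x b(x,y1)` is not in `D_x b(x,Ȳ)`), and `v0, v1` are `b`-convex
functions differentiable at `x` with `Dv_i(x) = D_x b(x,y_i)`, then `(1-t) v0 + t v1` is not
`b`-convex; in particular the set of `b`-convex functions is not convex. -/
theorem statement_3 (m n : ℕ) (X : Set (Fin m → ℝ)) (Ybar : Set (Fin n → ℝ))
    (hXo : IsOpen X) (hYc : IsCompact Ybar)
    (b : (Fin m → ℝ) → (Fin n → ℝ) → ℝ)
    (hb : Continuous (fun p : (Fin m → ℝ) × (Fin n → ℝ) => b p.1 p.2))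
    (hbx : ∀ y ∈ Ybar, Differentiable ℝ (fun x' => b x' y))
    (x : Fin m → ℝ) (hx : x ∈ X)
    (y0 y1 : Fin n → ℝ) (hy0 : y0 ∈ Ybar) (hy1 : y1 ∈ Ybar)
    (t : ℝ) (ht : t ∈ Set.Ioo (0 : ℝ) 1)
    (hp : (1 - t) • fderiv ℝ (fun x' => b x' y0) x + t • fderiv ℝ (fun x' => b x' y1) x ∉
      (fun y => fderiv ℝ (fun x' => b x' y) x) '' Ybar)
    (v0 v1 : (Fin m → ℝ) → ℝ)
    (hv0 : BConvexOn m n X Ybar b v0) (hv1 : BConvexOn m n X Ybar b v1)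
    (hd0 : DifferentiableAt ℝ v0 x) (hd1 : DifferentiableAt ℝ v1 x)
    (hD0 : fderiv ℝ v0 x = fderiv ℝ (fun x' => b x' y0) x)
    (hD1 : fderiv ℝ v1 x = fderiv ℝ (fun x' => b x' y1) x) :
    ¬ BConvexOn m n X Ybar b (fun x' => (1 - t) * v0 x' + t * v1 x') ∧
      ¬ Convex ℝ {u : (Fin m → ℝ) → ℝ | BConvexOn m n X Ybar b u} := by
  have hmain : ¬ BConvexOn m n X Ybar b (fun x' => (1 - t) * v0 x' + t * v1 x') := by
    intro hvt
    have hdvt : DifferentiableAt ℝ (fun x' => (1 - t) * v0 x' + t * v1 x') x :=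
      (hd0.const_mul (1 - t)).add (hd1.const_mul t)
    have hfd : fderiv ℝ (fun x' => (1 - t) * v0 x' + t * v1 x') x =
        (1 - t) • fderiv ℝ v0 x + t • fderiv ℝ v1 x := by
      rw [fderiv_fun_add (hd0.const_mul _) (hd1.const_mul _), fderiv_const_mul hd0,
        fderiv_const_mul hd1]
    obtain ⟨y, hy, heq⟩ := bconvex_fderiv_mem m n X Ybar hXo hYc b hb hbx _ hvt x hx hdvt
    exact hp ⟨y, hy, by dsimp only; rw [← heq, hfd, hD0, hD1]⟩
  refine ⟨hmain, fun hconv => hmain ?_⟩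
  have h01 : (0 : ℝ) ≤ 1 - t := by linarith [ht.2]
  have h02 : (0 : ℝ) ≤ t := le_of_lt ht.1
  have hmem := hconv hv0 hv1 h01 h02 (by ring)
  have heq : (1 - t) • v0 + t • v1 = fun x' => (1 - t) * v0 x' + t * v1 x' := rfl
  rwa [heq] at hmem
end

section
/- Assume the level sets L_x := {x̄ : D_y b(x̄, y) = D_y b(x, y)} are independent of y and connected. Fix y0 ∈ Y and define Q(x) := D_y b(x, y0). Then the function B(x, x̄, y) := b(x,y) − b(x,y0) − b(x̄,y) + b(x̄,y0) vanishes for all y ∈ Y whenever Q(x) = Q(x̄); consequently h(z, y) := b(x, y) − b(x, y0) for any x with Q(x) = z is well defined. -/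
/-- If the level sets `L_x = {x̄ : D_y b(x̄,y) = D_y b(x,y)}` are independent of `y`, then
`B(x,x̄,y) = b(x,y) - b(x,y0) - b(x̄,y) + b(x̄,y0)` vanishes for all `y ∈ Y` whenever
`Q(x) = Q(x̄)`, where `Q(x) = D_y b(x,y0)`; hence the effective preference
`h(z,y) := b(x,y) - b(x,y0)` for `x ∈ Q⁻¹(z)` is well defined. -/
theorem statement_7 (m n : ℕ) (X : Set (Fin m → ℝ)) (Y : Set (Fin n → ℝ))
    (hYo : IsOpen Y) (hYc : IsConnected Y)
    (b : (Fin m → ℝ) → (Fin n → ℝ) → ℝ)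
    (hC1 : ∀ x ∈ X, ContDiffOn ℝ 1 (b x) Y)
    (y0 : Fin n → ℝ) (hy0 : y0 ∈ Y)
    (hindep : ∀ x ∈ X, ∀ xb ∈ X, fderiv ℝ (b xb) y0 = fderiv ℝ (b x) y0 →
      ∀ y ∈ Y, fderiv ℝ (b xb) y = fderiv ℝ (b x) y) :
    ∀ x ∈ X, ∀ xb ∈ X, fderiv ℝ (b x) y0 = fderiv ℝ (b xb) y0 →
      ∀ y ∈ Y, b x y - b x y0 - b xb y + b xb y0 = 0 := by
  intro x hx xb hxb hQ y hy
  set f : (Fin n → ℝ) → ℝ := fun y => b x y - b xb y with hf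
  -- differentiability at points of Y
  have hdiff : ∀ z ∈ Y, DifferentiableAt ℝ (b x) z ∧ DifferentiableAt ℝ (b xb) z := by
    intro z hz
    constructor
    · exact (((hC1 x hx z hz).contDiffAt (hYo.mem_nhds hz)).differentiableAt one_ne_zero)
    · exact (((hC1 xb hxb z hz).contDiffAt (hYo.mem_nhds hz)).differentiableAt one_ne_zero)
  have hfd : ∀ z ∈ Y, DifferentiableAt ℝ f z := fun z hz =>
    ((hdiff z hz).1.sub (hdiff z hz).2)
  have hfder : ∀ z ∈ Y, fderiv ℝ f z = 0 := by
    intro z hz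
    have := hindep x hx xb hxb hQ.symm z hz
    rw [hf]
    rw [fderiv_fun_sub (hdiff z hz).1 (hdiff z hz).2, this, sub_self]
  -- locally constant on the subtype
  set g : Y → ℝ := fun p => f p.1 with hg
  have hlc : IsLocallyConstant g := by
    rw [IsLocallyConstant.iff_exists_open]
    intro ⟨z, hz⟩
    obtain ⟨r, hr, hball⟩ := Metric.isOpen_iff.1 hYo z hz
    refine ⟨Subtype.val ⁻¹' Metric.ball z r, Metric.isOpen_ball.preimage continuous_subtype_val,
      Metric.mem_ball_self hr, ?_⟩
    intro ⟨w, hw⟩ hwb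
    have hconst : ∀ u ∈ Metric.ball z r, f u = f z := by
      intro u hu
      exact (convex_ball z r).is_const_of_fderivWithin_eq_zero
        (fun v hv => (hfd v (hball hv)).differentiableWithinAt)
        (fun v hv => by
          rw [fderivWithin_of_isOpen Metric.isOpen_ball hv]
          exact hfder v (hball hv))
        hu (Metric.mem_ball_self hr)
    exact hconst w hwb
  have : g ⟨y, hy⟩ = g ⟨y0, hy0⟩ := by
    have : PreconnectedSpace Y := Subtype.preconnectedSpace hYc.isPreconnected
    exact hlc.apply_eq_of_isPreconnected isPreconnected_univ trivial trivial
  simp only [hg, hf] at this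
  linarith
end

section
/- Let X = [0,1], Y = {0,1}, b(x,y) = xy + y, c(y) = y², with consumer density f(x) = 60x² − 80x + 29 on [0,1] and the null good y = 0 offered at price 0. For a price v ∈ [1,2] charged for good y = 1, the monopolist's profit equals (v − 3/2)² − 20(v − 3/2)⁴ + 1, and this function of v is maximized on [1,2] exactly at the two points v = 3/2 ± 1/(2√10). -/
lemma integ (a : ℝ) : (∫ x in a..1, (60 * x ^ 2 - 80 * x + 29 : ℝ))
    = 9 - (20 * a ^ 3 - 40 * a ^ 2 + 29 * a) := by
  have h : ∀ x ∈ Set.uIcc a 1, HasDerivAt (fun x : ℝ => 20 * x ^ 3 - 40 * x ^ 2 + 29 * x)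
      (60 * x ^ 2 - 80 * x + 29) x := by
    intro x _
    have : HasDerivAt (fun x : ℝ => 20 * x ^ 3 - 40 * x ^ 2 + 29 * x)
        (20 * (3 * x ^ 2) - 40 * (2 * x) + 29 * 1) x := by
      refine HasDerivAt.congr_deriv ((((hasDerivAt_pow 3 x).const_mul 20).sub
        ((hasDerivAt_pow 2 x).const_mul (40:ℝ))).add ((hasDerivAt_id x).const_mul (29:ℝ))) ?_
      norm_num
    convert this using 1; ring
  have := intervalIntegral.integral_eq_sub_of_hasDerivAt h
    (by apply Continuous.intervalIntegrable; continuity)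
  rw [this]; ring

lemma profit_eq (v : ℝ) :
    (v - 1) * (∫ x in (v - 1)..1, (60 * x ^ 2 - 80 * x + 29 : ℝ))
      = (v - 3 / 2) ^ 2 - 20 * (v - 3 / 2) ^ 4 + 1 := by
  rw [integ]; ring

/-- In the example `X = [0,1]`, goods `{0,1}`, `b(x,y) = xy + y`, `c(y) = y²`, density
`f(x) = 60x² - 80x + 29`: for each price `v ∈ [1,2]` the monopolist's profit
`(v - c(1)) ∫_{v-1}^1 f(x) dx` equals `(v - 3/2)² - 20(v - 3/2)⁴ + 1`, and this is maximized
over `[1,2]` exactly at the two points `v = 3/2 ± 1/(2√10)`. -/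
theorem statement_14 :
    (∀ v ∈ Set.Icc (1 : ℝ) 2,
      (v - 1) * (∫ x in (v - 1)..1, (60 * x ^ 2 - 80 * x + 29))
        = (v - 3 / 2) ^ 2 - 20 * (v - 3 / 2) ^ 4 + 1) ∧
    {v ∈ Set.Icc (1 : ℝ) 2 | ∀ w ∈ Set.Icc (1 : ℝ) 2,
        (w - 1) * (∫ x in (w - 1)..1, (60 * x ^ 2 - 80 * x + 29))
          ≤ (v - 1) * (∫ x in (v - 1)..1, (60 * x ^ 2 - 80 * x + 29))}
      = {3 / 2 + 1 / (2 * Real.sqrt 10), 3 / 2 - 1 / (2 * Real.sqrt 10)} := by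
  have hs : Real.sqrt 10 > 0 := Real.sqrt_pos.2 (by norm_num)
  have hs2 : Real.sqrt 10 ^ 2 = 10 := Real.sq_sqrt (by norm_num)
  have hs3 : Real.sqrt 10 ≥ 3 := by nlinarith
  set e : ℝ := 1 / (2 * Real.sqrt 10) with he
  have he2 : e ^ 2 = 1 / 40 := by
    rw [he, div_pow, one_pow]; rw [mul_pow]; rw [hs2]; norm_num
  have hepos : 0 < e := by positivity
  have hele : e ≤ 1 / 2 := by
    rw [he]; rw [div_le_div_iff₀ (by positivity) (by norm_num)]; nlinarith
  -- upper bound: g v ≤ 1 + 1/80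
  have hub : ∀ v : ℝ, (v - 3 / 2) ^ 2 - 20 * (v - 3 / 2) ^ 4 + 1 ≤ 1 + 1 / 80 := by
    intro v; nlinarith [sq_nonneg ((v - 3 / 2) ^ 2 - 1 / 40)]
  have hval : ∀ v : ℝ, (v - 3 / 2) ^ 2 = 1 / 40 →
      (v - 3 / 2) ^ 2 - 20 * (v - 3 / 2) ^ 4 + 1 = 1 + 1 / 80 := by
    intro v h
    have h4 : (v - 3 / 2) ^ 4 = 1 / 1600 := by
      rw [show (v - 3 / 2) ^ 4 = ((v - 3 / 2) ^ 2) ^ 2 by ring, h]; norm_num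
    rw [h, h4]; norm_num
  constructor
  · intro v _; exact profit_eq v
  · ext v
    simp only [Set.mem_setOf_eq, Set.mem_insert_iff, Set.mem_singleton_iff]
    constructor
    · rintro ⟨hv, hmax⟩
      have h1 : (3 / 2 + e) ∈ Set.Icc (1 : ℝ) 2 := by
        constructor <;> [linarith; linarith]
      have := hmax _ h1
      rw [profit_eq, profit_eq] at this
      have hge : 1 + 1 / 80 ≤ (v - 3 / 2) ^ 2 - 20 * (v - 3 / 2) ^ 4 + 1 := by
        have := hval (3 / 2 + e) (by rw [show (3/2 + e - 3/2 : ℝ) = e by ring]; exact he2)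
        linarith
      have heq : (v - 3 / 2) ^ 2 = 1 / 40 := by nlinarith [hub v]
      have : (v - 3 / 2 - e) * (v - 3 / 2 + e) = 0 := by nlinarith
      rcases mul_eq_zero.1 this with h | h
      · left; linarith
      · right; linarith
    · rintro (h | h) <;> subst h
      · refine ⟨⟨by linarith, by linarith⟩, fun w hw => ?_⟩
        rw [profit_eq, profit_eq]
        have h2 := hval (3 / 2 + e) (by rw [show (3/2 + e - 3/2 : ℝ) = e by ring]; exact he2)
        linarith [hub w]
      · refine ⟨⟨by linarith, by linarith⟩, fun w hw => ?_⟩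
        rw [profit_eq, profit_eq]
        have h2 := hval (3 / 2 - e) (by rw [show (3/2 - e - 3/2 : ℝ) = -e by ring,
          neg_pow, neg_one_sq, one_mul]; exact he2)
        linarith [hub w]
end

section
/- In the setting of Section 5 (n > m), assume level sets L_y = Q^{-1}(Q(y)) with Q(y) := D_x b(x0, y) are independent of x, and define g(w) := inf_{y : Q(y) = w} (c(y) − b(x0, y)). If c is b-convex, i.e. c(y) = sup_{x∈X}(b(x,y) − c^b(x)), then g(w) = sup_{x∈X}(h(x,w) − c^b(x)), where h(x, Q(y)) := b(x,y) − b(x0,y); that is, g is h-convex with g^h = c^b. -/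
/-- Section 5 setting (`n > m`): with `Q(y) = D_x b(x0,y)`, `W = Q(Y)`,
`h(x,Q(y)) = b(x,y) - b(x0,y)` well defined, and
`g(w) = inf_{y : Q(y) = w} (c(y) - b(x0,y))`: if `c` is `b`-convex
(`c(y) = sup_{x∈X} (b(x,y) - c^b(x))`), then `g(w) = sup_{x∈X} (h(x,w) - c^b(x))`,
i.e. `g` is `h`-convex with `g^h = c^b`. -/
theorem statement_17 (m n : ℕ) (hnm : m < n)
    (X : Set (EuclideanSpace ℝ (Fin m))) (Y : Set (EuclideanSpace ℝ (Fin n)))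
    (b : EuclideanSpace ℝ (Fin m) → EuclideanSpace ℝ (Fin n) → ℝ)
    (c : EuclideanSpace ℝ (Fin n) → ℝ)
    (x0 : EuclideanSpace ℝ (Fin m)) (hx0 : x0 ∈ X)
    (h : EuclideanSpace ℝ (Fin m) → EuclideanSpace ℝ (Fin m) → ℝ)
    (hh : ∀ x ∈ X, ∀ y ∈ Y, h x (gradient (fun x' => b x' y) x0) = b x y - b x0 y)
    (cb : EuclideanSpace ℝ (Fin m) → ℝ)
    (hcb : ∀ x ∈ X, IsLUB {r : ℝ | ∃ y ∈ Y, r = b x y - c y} (cb x))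
    (hbconv : ∀ y ∈ Y, IsLUB {r : ℝ | ∃ x ∈ X, r = b x y - cb x} (c y))
    (g : EuclideanSpace ℝ (Fin m) → ℝ)
    (hg : ∀ w ∈ (fun y => gradient (fun x' => b x' y) x0) '' Y,
      IsGLB {r : ℝ | ∃ y ∈ Y, gradient (fun x' => b x' y) x0 = w ∧ r = c y - b x0 y} (g w)) :
    ∀ w ∈ (fun y => gradient (fun x' => b x' y) x0) '' Y,
      IsLUB {r : ℝ | ∃ x ∈ X, r = h x w - cb x} (g w) := by
  intro w hw
  obtain ⟨y0, hy0, hQy0⟩ := hw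
  -- For any y in the level set, c y - b x0 y is the LUB of S
  have key : ∀ y ∈ Y, gradient (fun x' => b x' y) x0 = w →
      IsLUB {r : ℝ | ∃ x ∈ X, r = h x w - cb x} (c y - b x0 y) := by
    intro y hy hQy
    obtain ⟨hub, hlub⟩ := hbconv y hy
    constructor
    · rintro r ⟨x, hx, rfl⟩
      have h1 : b x y - cb x ≤ c y := hub ⟨x, hx, rfl⟩
      have h2 : h x w = b x y - b x0 y := by rw [← hQy]; exact hh x hx y hy
      linarith
    · intro u hu
      have : c y ≤ u + b x0 y := by
        apply hlub
        rintro r ⟨x, hx, rfl⟩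
        have h2 : h x w = b x y - b x0 y := by rw [← hQy]; exact hh x hx y hy
        have := hu ⟨x, hx, rfl⟩
        linarith
      linarith
  have hglb := hg w ⟨y0, hy0, hQy0⟩
  have hL := key y0 hy0 hQy0
  have hge : g w ≤ c y0 - b x0 y0 := hglb.1 ⟨y0, hy0, hQy0, rfl⟩
  have hle : c y0 - b x0 y0 ≤ g w := by
    apply hglb.2
    rintro r ⟨y, hy, hQy, rfl⟩
    exact le_of_eq (hL.unique (key y hy hQy))
  have : g w = c y0 - b x0 y0 := le_antisymm hge hle
  rw [this]
  exact hL
end
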